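/- Let P be a finite poset. The set of extreme points of the compact convex set Δ(P) ⊆ ℝ^P is exactly {1_F : F ⊆ P is an upper set}, where 1_F denotes the 0/1 indicator vector of F. In particular, the vertices of Δ(P) are in bijection with the order ideals of P (an upper set corresponding to the order ideal given by its complement), so Δ(P) has exactly |J(P)| vertices. -/

import Mathlib

/-- The order polytope of a finite poset `P`. -/
def orderPolytope (P : Type*) [PartialOrder P] : Set (P → ℝ) :=
  {x | (∀ u : P, 0 ≤ x u ∧ x u ≤ 1) ∧ ∀ u v : P, u ≤ v → x u ≤ x v}

/-- The 0/1 indicator vector of a subset `F ⊆ P`. -/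
noncomputable def indicatorVec {P : Type*} (F : Set P) : P → ℝ :=
  Set.indicator F (fun _ => 1)

lemma indicatorVec_injective {P : Type*} : Function.Injective (indicatorVec (P := P)) := by
  intro A B h
  ext u
  have h' := congrFun h u
  simp only [indicatorVec, Set.indicator_apply] at h'
  by_cases hA : u ∈ A <;> by_cases hB : u ∈ B <;> simp [hA, hB] at h' ⊢

-- indicator of upper set is an extreme point
lemma ind_mem {P : Type*} [PartialOrder P] {F : Set P} (hF : IsUpperSet F) :
    indicatorVec F ∈ orderPolytope P := by
  constructor
  · intro u
    simp only [indicatorVec, Set.indicator_apply]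
    by_cases h : u ∈ F <;> simp [h]
  · intro u v huv
    simp only [indicatorVec, Set.indicator_apply]
    by_cases h : u ∈ F
    · simp [h, hF huv h]
    · by_cases h2 : v ∈ F <;> simp [h, h2]

lemma ind_extreme {P : Type*} [PartialOrder P] {F : Set P} (hF : IsUpperSet F) :
    indicatorVec F ∈ Set.extremePoints ℝ (orderPolytope P) := by
  refine ⟨ind_mem hF, ?_⟩
  rintro x₁ hx₁ x₂ hx₂ ⟨a, b, ha, hb, hab, hsum⟩
  have key : x₁ = indicatorVec F ∧ x₂ = indicatorVec F := by
    constructor <;> ext u <;> {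
      have h1 := (hx₁.1 u); have h2 := (hx₂.1 u)
      have hs := congrFun hsum u
      simp only [Pi.add_apply, Pi.smul_apply, smul_eq_mul] at hs
      simp only [indicatorVec, Set.indicator_apply] at hs ⊢
      by_cases h : u ∈ F <;> simp [h] at hs ⊢ <;> nlinarith [h1.1, h1.2, h2.1, h2.2]
    }
  exact key.1

-- extreme point is 0/1 valued
lemma extreme_zero_one {P : Type*} [PartialOrder P] [Fintype P] {x : P → ℝ}
    (hx : x ∈ Set.extremePoints ℝ (orderPolytope P)) (u : P) : x u = 0 ∨ x u = 1 := by
  by_contra h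
  push_neg at h
  obtain ⟨h0, h1⟩ := h
  have hmem := hx.1
  have hu0 : 0 < x u := lt_of_le_of_ne (hmem.1 u).1 (Ne.symm h0)
  have hu1 : x u < 1 := lt_of_le_of_ne (hmem.1 u).2 h1
  set t := x u with ht
  -- define ε
  have hne : (Finset.univ : Finset P).Nonempty := ⟨u, Finset.mem_univ u⟩
  set g : P → ℝ := fun w => if x w = t then min t (1 - t) else |x w - t| with hg
  set ε := Finset.univ.inf' hne g with hε
  have hεpos : 0 < ε := by
    rw [hε, Finset.lt_inf'_iff]
    intro w _
    rw [hg]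
    by_cases hw : x w = t
    · simp only [if_pos hw, lt_min_iff]
      exact ⟨hu0, by linarith⟩
    · simp only [if_neg hw]
      rw [abs_pos, sub_ne_zero]
      exact hw
  have hεle : ∀ w, ε ≤ g w := fun w => Finset.inf'_le _ (Finset.mem_univ w)
  set y : P → ℝ := fun w => if x w = t then ε else 0 with hy
  have hεt : ε ≤ t ∧ ε ≤ 1 - t := by
    have := hεle u
    simp only [hg] at this; rw [if_pos (show x u = t from rfl)] at this
    exact le_min_iff.mp this
  have hmem1 : x + y ∈ orderPolytope P := by
    constructor
    · intro w
      simp only [Pi.add_apply, hy]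
      by_cases hw : x w = t
      · rw [if_pos hw, hw]
        constructor
        · linarith [hεpos]
        · linarith [hεt.2]
      · rw [if_neg hw]; simpa using hmem.1 w
    · intro v w hvw
      have hmono := hmem.2 v w hvw
      simp only [Pi.add_apply, hy]
      by_cases hv : x v = t <;> by_cases hw : x w = t
      · rw [if_pos hv, if_pos hw]; linarith
      · rw [if_pos hv, if_neg hw]
        have := hεle w
        simp only [hg, if_neg hw] at this
        have hgt : t < x w := lt_of_le_of_ne (hv ▸ hmono) (Ne.symm hw)
        rw [abs_of_pos (by linarith)] at this
        linarith
      · rw [if_neg hv, if_pos hw]; linarith [hεpos]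
      · rw [if_neg hv, if_neg hw]; linarith
  have hmem2 : x - y ∈ orderPolytope P := by
    constructor
    · intro w
      simp only [Pi.sub_apply, hy]
      by_cases hw : x w = t
      · rw [if_pos hw, hw]
        constructor
        · linarith [hεt.1]
        · linarith [hεpos]
      · rw [if_neg hw]; simpa using hmem.1 w
    · intro v w hvw
      have hmono := hmem.2 v w hvw
      simp only [Pi.sub_apply, hy]
      by_cases hv : x v = t <;> by_cases hw : x w = t
      · rw [if_pos hv, if_pos hw]; linarith
      · rw [if_pos hv, if_neg hw]; linarith [hεpos]
      · rw [if_neg hv, if_pos hw]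
        have := hεle v
        simp only [hg, if_neg hv] at this
        have hlt : x v < t := lt_of_le_of_ne (hw ▸ hmono) hv
        rw [abs_of_neg (by linarith)] at this
        linarith
      · rw [if_neg hv, if_neg hw]; linarith
  have hseg : x ∈ openSegment ℝ (x + y) (x - y) := by
    refine ⟨1/2, 1/2, by norm_num, by norm_num, by norm_num, ?_⟩
    ext w
    simp only [Pi.add_apply, Pi.smul_apply, Pi.sub_apply, smul_eq_mul]
    ring
  have hkey := hx.2 hmem1 hmem2 hseg
  have hyu : y u = ε := by rw [hy]; simp only [if_pos (show x u = t from rfl)]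
  have := congrFun hkey u
  simp only [Pi.add_apply] at this
  rw [hyu] at this
  linarith

/-- The extreme points of the order polytope `Δ(P)` are exactly the indicator
vectors of upper sets of `P`; consequently the vertices of `Δ(P)` are in bijection
with the order ideals of `P` (complements of upper sets), so there are `|J(P)|`
of them. -/
theorem extremePoints_orderPolytope (P : Type*) [PartialOrder P] [Fintype P] :
    Set.extremePoints ℝ (orderPolytope P) =
      {x : P → ℝ | ∃ F : Set P, IsUpperSet F ∧ x = indicatorVec F} ∧
    (Set.extremePoints ℝ (orderPolytope P)).ncard =
      Nat.card {τ : Set P // IsLowerSet τ} := by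
  have heq : Set.extremePoints ℝ (orderPolytope P) =
      {x : P → ℝ | ∃ F : Set P, IsUpperSet F ∧ x = indicatorVec F} := by
    ext x
    constructor
    · intro hx
      refine ⟨{u | x u = 1}, ?_, ?_⟩
      · intro u v huv hu
        have hmono := hx.1.2 u v huv
        have h01 := extreme_zero_one hx v
        simp only [Set.mem_setOf_eq] at hu ⊢
        rcases h01 with h | h
        · rw [hu] at hmono; linarith [h ▸ hmono]
        · exact h
      · ext u
        simp only [indicatorVec, Set.indicator_apply, Set.mem_setOf_eq]
        rcases extreme_zero_one hx u with h | h <;> simp [h]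
    · rintro ⟨F, hF, rfl⟩
      exact ind_extreme hF
  refine ⟨heq, ?_⟩
  rw [heq, ← Nat.card_coe_set_eq]
  refine (Nat.card_congr (Equiv.ofBijective
    (fun τ => ⟨indicatorVec (τ : Set P)ᶜ, ⟨(τ : Set P)ᶜ, τ.2.compl, rfl⟩⟩ :
      {τ : Set P // IsLowerSet τ} →
        {x : P → ℝ | ∃ F : Set P, IsUpperSet F ∧ x = indicatorVec F}) ⟨?_, ?_⟩)).symm
  · intro τ₁ τ₂ h
    have := indicatorVec_injective (congrArg Subtype.val h)
    exact Subtype.ext (compl_injective this)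
  · rintro ⟨x, F, hF, rfl⟩
    exact ⟨⟨Fᶜ, hF.compl⟩, by simp⟩
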